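/- For every λ ∈ (0,1], the function ν_{1+λ,λ} : ℝ → ℝ, ν_{1+λ,λ}(r) = (1+λ)·(e^r − 1)·r + (e^{−r} + r − 1) − λ·(e^r − r − 1), is strictly convex on ℝ; equivalently, its second derivative e^r·((1+λ)r + 2 + λ) + e^{−r} is strictly positive for every r ∈ ℝ. -/

import Mathlib

open Real Set

lemma aux_mul_exp_19 (r : ℝ) : -(1/2 : ℝ) ≤ r * Real.exp r := by
  rcases le_or_gt 0 r with h | h
  · nlinarith [Real.exp_pos r]
  · have h1 : -r ≤ Real.exp (-r - 1) := by
      have := Real.add_one_le_exp (-r - 1); linarith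
    have h2 : Real.exp (-r - 1) * Real.exp r = Real.exp (-1 : ℝ) := by
      rw [← Real.exp_add]; ring_nf
    have h3 : Real.exp (-1 : ℝ) ≤ 1/2 := by
      have h4 : (2:ℝ) ≤ Real.exp 1 := by
        have := Real.add_one_le_exp (1:ℝ); linarith
      have h5 : Real.exp (-1 : ℝ) * Real.exp 1 = 1 := by
        rw [← Real.exp_add]; norm_num
      nlinarith [Real.exp_pos (-1 : ℝ)]
    nlinarith [mul_le_mul_of_nonneg_right h1 (Real.exp_pos r).le]

lemma pos_19 (lam : ℝ) (h0 : 0 < lam) (h1 : lam ≤ 1) (r : ℝ) :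
    0 < Real.exp r * ((1 + lam) * r + 2 + lam) + Real.exp (-r) := by
  have ha := Real.exp_pos r
  have hb := Real.exp_pos (-r)
  have hab : Real.exp r * Real.exp (-r) = 1 := by
    rw [← Real.exp_add]; norm_num
  have hre := aux_mul_exp_19 r
  have h2ab : 1 < 2 * Real.exp r + Real.exp (-r) := by
    nlinarith [sq_nonneg (2 * Real.exp r - 1)]
  nlinarith [mul_le_mul_of_nonneg_left hre (by linarith : (0:ℝ) ≤ 1 + lam),
    mul_pos h0 ha]

/-- Lemma A.1: for every `λ ∈ (0,1]` the function
`ν_{1+λ,λ}(r) = (1+λ)(e^r-1)r + (e^{-r}+r-1) - λ(e^r-r-1)` is strictly convex on `ℝ`;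
equivalently its second derivative `e^r((1+λ)r+2+λ) + e^{-r}` is strictly positive. -/
theorem stmt_19 (lam : ℝ) (h0 : 0 < lam) (h1 : lam ≤ 1) :
    StrictConvexOn ℝ Set.univ (fun r : ℝ =>
      (1 + lam) * (Real.exp r - 1) * r + (Real.exp (-r) + r - 1) -
        lam * (Real.exp r - r - 1))
    ∧ ∀ r : ℝ, 0 < Real.exp r * ((1 + lam) * r + 2 + lam) + Real.exp (-r) := by
  set f : ℝ → ℝ := fun r : ℝ =>
      (1 + lam) * (Real.exp r - 1) * r + (Real.exp (-r) + r - 1) -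
        lam * (Real.exp r - r - 1) with hf_def
  set F' : ℝ → ℝ := fun x =>
      (1 + lam) * (Real.exp x * x + Real.exp x - 1) - Real.exp (-x) + 1 -
        lam * (Real.exp x - 1) with hF'_def
  have hf : ∀ x : ℝ, HasDerivAt f (F' x) x := by
    intro x
    have t1 : HasDerivAt (fun x : ℝ => (1 + lam) * (Real.exp x - 1) * x)
        ((1 + lam) * Real.exp x * x + (1 + lam) * (Real.exp x - 1) * 1) x :=
      (((Real.hasDerivAt_exp x).sub_const 1).const_mul (1 + lam)).mul (hasDerivAt_id x)
    have t2 : HasDerivAt (fun x : ℝ => Real.exp (-x) + x - 1)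
        (Real.exp (-x) * (-1) + 1) x :=
      (((hasDerivAt_neg x).exp).add (hasDerivAt_id x)).sub_const 1
    have t3 : HasDerivAt (fun x : ℝ => lam * (Real.exp x - x - 1))
        (lam * (Real.exp x - 1)) x := by
      have := (((Real.hasDerivAt_exp x).sub (hasDerivAt_id x)).sub_const 1).const_mul lam
      exact this.congr_deriv (by ring)
    have := (t1.add t2).sub t3
    exact this.congr_deriv (by ring)
  have hf' : ∀ x : ℝ, HasDerivAt F'
      (Real.exp x * ((1 + lam) * x + 2 + lam) + Real.exp (-x)) x := by
    intro x
    have p1 : HasDerivAt (fun x : ℝ => (1 + lam) * (Real.exp x * x + Real.exp x - 1))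
        ((1 + lam) * ((Real.exp x * x + Real.exp x * 1) + Real.exp x)) x :=
      ((((Real.hasDerivAt_exp x).mul (hasDerivAt_id x)).add
        (Real.hasDerivAt_exp x)).sub_const 1).const_mul (1 + lam)
    have p2 : HasDerivAt (fun x : ℝ => Real.exp (-x)) (Real.exp (-x) * (-1)) x :=
      (hasDerivAt_neg x).exp
    have p3 : HasDerivAt (fun x : ℝ => lam * (Real.exp x - 1)) (lam * Real.exp x) x :=
      ((Real.hasDerivAt_exp x).sub_const 1).const_mul lam
    have := ((p1.sub p2).add_const 1).sub p3
    exact this.congr_deriv (by ring)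
  have hderiv : deriv f = F' := funext fun x => (hf x).deriv
  refine ⟨?_, fun r => pos_19 lam h0 h1 r⟩
  apply strictConvexOn_of_deriv2_pos convex_univ
  · exact Continuous.continuousOn (by fun_prop)
  · intro x _
    show 0 < deriv (deriv f) x
    rw [hderiv, (hf' x).deriv]
    exact pos_19 lam h0 h1 x
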